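/- (Concentration for block sampling.) Let B' ⊆ B_o be a set of slots partitioned among advertisers such that each advertiser contributes at most ατ slots, where |B_o| = τ. Let B'[q] be the random subset obtained by including, independently for each advertiser a with probability q, all slots of a that lie in B'. Then for every β ∈ (0,1], Pr[| |B'[q]| − q·|B'| | ≥ βτ] ≤ 2·exp(−2β²/α). -/

import Mathlib

open MeasureTheory ProbabilityTheory

section HoeffdingAux
open Real

lemma upos {q : ℝ} (hq0 : 0 ≤ q) (hq1 : q ≤ 1) (y : ℝ) :
    0 < 1 - q + q * Real.exp y := by
  rcases eq_or_lt_of_le hq0 with h | h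
  · simp [← h]
  · have := Real.exp_pos y
    nlinarith

lemma hoeff_core (q : ℝ) (hq0 : 0 ≤ q) (hq1 : q ≤ 1) (x : ℝ) :
    (1 - q) * Real.exp (-(q * x)) + q * Real.exp ((1 - q) * x) ≤ Real.exp (x ^ 2 / 8) := by
  set g : ℝ → ℝ := fun y => q * y + y ^ 2 / 8 - Real.log (1 - q + q * Real.exp y) with hg_def
  set g' : ℝ → ℝ := fun y => q + y / 4 - q * Real.exp y / (1 - q + q * Real.exp y) with hg'_def
  have hu : ∀ y : ℝ, 0 < 1 - q + q * Real.exp y := upos hq0 hq1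
  have hud : ∀ y : ℝ, HasDerivAt (fun z => 1 - q + q * Real.exp z) (q * Real.exp y) y := by
    intro y
    exact ((Real.hasDerivAt_exp y).const_mul q).const_add (1 - q)
  have hgd : ∀ y, HasDerivAt g (g' y) y := by
    intro y
    have h1 : HasDerivAt (fun z : ℝ => q * z + z ^ 2 / 8) (q + y / 4) y := by
      have := ((hasDerivAt_id y).const_mul q).add ((hasDerivAt_pow 2 y).div_const 8)
      exact this.congr_deriv (by rw [show (2:ℕ) - 1 = 1 from rfl]; push_cast; ring)
    have h2 : HasDerivAt (fun z => Real.log (1 - q + q * Real.exp z))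
        (q * Real.exp y / (1 - q + q * Real.exp y)) y := (hud y).log (hu y).ne'
    exact h1.sub h2
  have hgd' : ∀ y, HasDerivAt g'
      (1 / 4 - q * (1 - q) * Real.exp y / (1 - q + q * Real.exp y) ^ 2) y := by
    intro y
    have h1 : HasDerivAt (fun z : ℝ => q + z / 4) (1 / 4) y :=
      ((hasDerivAt_id y).div_const 4).const_add q
    have h2 : HasDerivAt (fun z => q * Real.exp z / (1 - q + q * Real.exp z))
        ((q * Real.exp y * (1 - q + q * Real.exp y) - q * Real.exp y * (q * Real.exp y)) /
          (1 - q + q * Real.exp y) ^ 2) y :=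
      ((Real.hasDerivAt_exp y).const_mul q).div (hud y) (hu y).ne'
    have := h1.sub h2
    have hne := (hu y).ne'
    exact this.congr_deriv (by ring)
  have hg''nn : ∀ y : ℝ, 0 ≤ 1 / 4 - q * (1 - q) * Real.exp y / (1 - q + q * Real.exp y) ^ 2 := by
    intro y
    rw [sub_nonneg, div_le_iff₀ (pow_pos (hu y) 2)]
    nlinarith [sq_nonneg ((1 - q) - q * Real.exp y), (Real.exp_pos y).le]
  have hg'mono : Monotone g' :=
    monotone_of_deriv_nonneg (fun y => (hgd' y).differentiableAt)
      (fun y => by rw [(hgd' y).deriv]; exact hg''nn y)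
  have hg'0 : g' 0 = 0 := by
    simp [hg'_def]
  have hg0 : g 0 = 0 := by
    simp [hg_def]
  have hgdiff : Differentiable ℝ g := fun y => (hgd y).differentiableAt
  have hgnn : ∀ y : ℝ, 0 ≤ g y := by
    intro y
    rcases le_total 0 y with hy | hy
    · have hmono : MonotoneOn g (Set.Ici 0) := by
        apply monotoneOn_of_deriv_nonneg (convex_Ici 0) hgdiff.continuous.continuousOn
          hgdiff.differentiableOn
        intro z hz
        rw [(hgd z).deriv, ← hg'0]
        exact hg'mono (le_of_lt (by simpa using hz))
      have := hmono Set.self_mem_Ici (Set.mem_Ici.2 hy) hy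
      rwa [hg0] at this
    · have hanti : AntitoneOn g (Set.Iic 0) := by
        apply antitoneOn_of_deriv_nonpos (convex_Iic 0) hgdiff.continuous.continuousOn
          hgdiff.differentiableOn
        intro z hz
        rw [(hgd z).deriv, ← hg'0]
        exact hg'mono (le_of_lt (by simpa using hz))
      have := hanti (Set.mem_Iic.2 hy) Set.self_mem_Iic hy
      rwa [hg0] at this
  have key : 1 - q + q * Real.exp x ≤ Real.exp (q * x + x ^ 2 / 8) := by
    rw [← Real.log_le_iff_le_exp (hu x)]
    have := hgnn x
    simp only [hg_def] at this
    linarith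
  have h1 : (1 - q) * Real.exp (-(q * x)) + q * Real.exp ((1 - q) * x)
      = Real.exp (-(q * x)) * (1 - q + q * Real.exp x) := by
    have : Real.exp ((1 - q) * x) = Real.exp (-(q * x)) * Real.exp x := by
      rw [← Real.exp_add]; ring_nf
    rw [this]; ring
  rw [h1]
  calc Real.exp (-(q * x)) * (1 - q + q * Real.exp x)
      ≤ Real.exp (-(q * x)) * Real.exp (q * x + x ^ 2 / 8) :=
        mul_le_mul_of_nonneg_left key (Real.exp_pos _).le
    _ = Real.exp (x ^ 2 / 8) := by rw [← Real.exp_add]; ring_nf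

section Bern
variable {Ω : Type*} [MeasurableSpace Ω] (μ : Measure Ω) [IsProbabilityMeasure μ]

lemma exp_eq (q c t : ℝ) (Z : Ω → ℝ) (hZval : ∀ ω, Z ω = 0 ∨ Z ω = 1) :
    (fun ω => Real.exp (t * ((Z ω - q) * c))) =
    fun ω => Z ω * Real.exp ((1 - q) * (t * c)) + (1 - Z ω) * Real.exp (-(q * (t * c))) := by
  funext ω
  rcases hZval ω with h | h <;> rw [h]
  · have h2 : t * ((0 - q) * c) = -(q * (t * c)) := by ring
    rw [h2]; ring
  · have h2 : t * ((1 - q) * c) = (1 - q) * (t * c) := by ring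
    rw [h2]; ring

lemma Z_eq_indicator (Z : Ω → ℝ) (hZval : ∀ ω, Z ω = 0 ∨ Z ω = 1) :
    Z = Set.indicator {ω | Z ω = 1} (fun _ => (1 : ℝ)) := by
  funext ω
  rcases hZval ω with h | h <;> simp [Set.indicator_apply, Set.mem_setOf_eq, h]

lemma Z_int (Z : Ω → ℝ) (hZ : Measurable Z) (hZval : ∀ ω, Z ω = 0 ∨ Z ω = 1) :
    Integrable Z μ := by
  rw [Z_eq_indicator Z hZval]
  exact (integrable_const 1).indicator (hZ (measurableSet_singleton 1))

lemma bern_exp_int (q c t : ℝ) (Z : Ω → ℝ) (hZ : Measurable Z)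
    (hZval : ∀ ω, Z ω = 0 ∨ Z ω = 1) :
    Integrable (fun ω => Real.exp (t * ((Z ω - q) * c))) μ := by
  rw [exp_eq q c t Z hZval]
  exact ((Z_int μ Z hZ hZval).mul_const _).add
    (((integrable_const (1:ℝ)).sub (Z_int μ Z hZ hZval)).mul_const _)

lemma bern_mgf_le (q c t : ℝ) (Z : Ω → ℝ) (hZ : Measurable Z)
    (hZval : ∀ ω, Z ω = 0 ∨ Z ω = 1) (hq0 : 0 ≤ q) (hq1 : q ≤ 1)
    (hZdist : μ {ω | Z ω = 1} = ENNReal.ofReal q) :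
    mgf (fun ω => (Z ω - q) * c) μ t ≤ Real.exp (t ^ 2 * c ^ 2 / 8) := by
  have hZint := Z_int μ Z hZ hZval
  have hs : MeasurableSet {ω | Z ω = 1} := hZ (measurableSet_singleton 1)
  have hZmean : ∫ ω, Z ω ∂μ = q := by
    rw [Z_eq_indicator Z hZval, integral_indicator_const _ hs,
      measureReal_def, hZdist, ENNReal.toReal_ofReal hq0]
    simp
  have hmgf : mgf (fun ω => (Z ω - q) * c) μ t =
      q * Real.exp ((1 - q) * (t * c)) + (1 - q) * Real.exp (-(q * (t * c))) := by
    have hi1 : Integrable (fun ω => Z ω * Real.exp ((1 - q) * (t * c))) μ :=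
      hZint.mul_const _
    have hi2 : Integrable (fun ω => (1 - Z ω) * Real.exp (-(q * (t * c)))) μ :=
      ((integrable_const (1:ℝ)).sub hZint).mul_const _
    rw [mgf]
    simp only
    rw [exp_eq q c t Z hZval, integral_add hi1 hi2,
      integral_mul_const, integral_mul_const,
      integral_sub (integrable_const 1) hZint, hZmean]
    simp
  rw [hmgf]
  have := hoeff_core q hq0 hq1 (t * c)
  have h2 : Real.exp ((t * c) ^ 2 / 8) = Real.exp (t ^ 2 * c ^ 2 / 8) := by
    congr 1; ring
  linarith
end Bern

end HoeffdingAux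

/-- Concentration for block sampling.  Each advertiser `a`
contributes `w a = |B' ∩ B(a)|` slots of `B'`, with `0 ≤ w a ≤ ατ` and
`Σ_a w a = |B'| ≤ τ`.  Each advertiser is retained independently with
probability `q` (indicator `X a`), so `|B'[q]| = Σ_a X a · w a`.  Then for
every `β ∈ (0,1]`,
`Pr[| |B'[q]| − q·|B'| | ≥ βτ] ≤ 2·exp(−2β²/α)`. -/
theorem stmt_7 {Ω : Type*} [MeasurableSpace Ω] (μ : Measure Ω)
    [IsProbabilityMeasure μ]
    {ι : Type*} [Fintype ι]
    (w : ι → ℝ) (α τ q β : ℝ)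
    (hα : 0 < α) (hα1 : α ≤ 1) (hτ : 0 < τ)
    (hw0 : ∀ a, 0 ≤ w a) (hwα : ∀ a, w a ≤ α * τ)
    (hwsum : ∑ a, w a ≤ τ)
    (hq0 : 0 ≤ q) (hq1 : q ≤ 1)
    (X : ι → Ω → ℝ)
    (hXmeas : ∀ a, Measurable (X a))
    (hXval : ∀ a ω, X a ω = 0 ∨ X a ω = 1)
    (hXdist : ∀ a, μ {ω | X a ω = 1} = ENNReal.ofReal q)
    (hXindep : iIndepFun X μ)
    (hβ : 0 < β) (hβ1 : β ≤ 1) :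
    μ {ω | β * τ ≤ |(∑ a, X a ω * w a) - q * ∑ a, w a|} ≤
      ENNReal.ofReal (2 * Real.exp (-2 * β ^ 2 / α)) := by
  classical
  set Y : ι → Ω → ℝ := fun a ω => (X a ω - q) * w a with hY_def
  set V : ℝ := ∑ a, (w a) ^ 2 with hV_def
  have hβτ : 0 < β * τ := mul_pos hβ hτ
  by_cases hV0 : V = 0
  · -- all weights are zero, event is empty
    have hw : ∀ a, w a = 0 := by
      intro a
      have h := (Finset.sum_eq_zero_iff_of_nonneg
        (fun a _ => sq_nonneg (w a))).1 hV0 a (Finset.mem_univ a)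
      exact (pow_eq_zero_iff two_ne_zero).1 h
    have hempty : {ω | β * τ ≤ |(∑ a, X a ω * w a) - q * ∑ a, w a|} = ∅ := by
      ext ω
      simp [hw, not_le, hβτ]
    rw [hempty]
    simp
  · have hVpos : 0 < V :=
      lt_of_le_of_ne (Finset.sum_nonneg fun a _ => sq_nonneg (w a)) (Ne.symm hV0)
    have hVle : V ≤ α * τ ^ 2 := by
      calc V = ∑ a, w a * w a := by simp [hV_def, sq]
        _ ≤ ∑ a, (α * τ) * w a :=
            Finset.sum_le_sum fun a _ => mul_le_mul_of_nonneg_right (hwα a) (hw0 a)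
        _ = (α * τ) * ∑ a, w a := by rw [Finset.mul_sum]
        _ ≤ (α * τ) * τ := by
            apply mul_le_mul_of_nonneg_left hwsum (by positivity)
        _ = α * τ ^ 2 := by ring
    set t : ℝ := 4 * β * τ / V with ht_def
    have ht : 0 < t := by positivity
    have hYmeas : ∀ a, Measurable (Y a) := fun a =>
      ((hXmeas a).sub measurable_const).mul_const (w a)
    have hYindep : iIndepFun Y μ := by
      have := hXindep.comp (fun a => fun x : ℝ => (x - q) * w a)
        (fun a => (measurable_id.sub measurable_const).mul_const (w a))
      exact this
    have hYint : ∀ s : ℝ, ∀ a : ι, Integrable (fun ω => Real.exp (s * Y a ω)) μ := by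
      intro s a
      exact bern_exp_int μ q (w a) s (X a) (hXmeas a) (hXval a)
    have hTint : ∀ s : ℝ, Integrable (fun ω => Real.exp (s * (∑ a, Y a) ω)) μ := fun s =>
      hYindep.integrable_exp_mul_sum hYmeas (fun a _ => hYint s a)
    have hmgfT : ∀ s : ℝ, mgf (∑ a, Y a) μ s ≤ Real.exp (s ^ 2 * V / 8) := by
      intro s
      rw [hYindep.mgf_sum hYmeas]
      calc ∏ a, mgf (Y a) μ s ≤ ∏ a, Real.exp (s ^ 2 * (w a) ^ 2 / 8) :=
            Finset.prod_le_prod (fun a _ => mgf_nonneg)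
              (fun a _ => bern_mgf_le μ q (w a) s (X a) (hXmeas a) (hXval a) hq0 hq1 (hXdist a))
        _ = Real.exp (∑ a, s ^ 2 * (w a) ^ 2 / 8) := by rw [Real.exp_sum]
        _ = Real.exp (s ^ 2 * V / 8) := by
            congr 1
            rw [hV_def, Finset.mul_sum, ← Finset.sum_div]
    have hexp_le : -t * (β * τ) + t ^ 2 * V / 8 ≤ -2 * β ^ 2 / α := by
      have heq : -t * (β * τ) + t ^ 2 * V / 8 = -(2 * (β * τ) ^ 2 / V) := by
        rw [ht_def]; field_simp; ring
      rw [heq]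
      have h2 : 2 * β ^ 2 / α ≤ 2 * (β * τ) ^ 2 / V := by
        rw [div_le_div_iff₀ hα hVpos]
        nlinarith [hVle, sq_nonneg β]
      have h3 : -2 * β ^ 2 / α = -(2 * β ^ 2 / α) := by ring
      rw [h3]
      linarith
    have hbound : ∀ s : ℝ, Real.exp (-t * (β * τ)) * mgf (∑ a, Y a) μ s ≤
        Real.exp (-2 * β ^ 2 / α) → True := fun _ _ => trivial
    -- upper tail
    have h1 : (μ {ω | β * τ ≤ (∑ a, Y a) ω}).toReal ≤ Real.exp (-2 * β ^ 2 / α) := by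
      refine (measure_ge_le_exp_mul_mgf (β * τ) ht.le (hTint t)).trans ?_
      calc Real.exp (-t * (β * τ)) * mgf (∑ a, Y a) μ t
          ≤ Real.exp (-t * (β * τ)) * Real.exp (t ^ 2 * V / 8) :=
            mul_le_mul_of_nonneg_left (hmgfT t) (Real.exp_pos _).le
        _ = Real.exp (-t * (β * τ) + t ^ 2 * V / 8) := (Real.exp_add _ _).symm
        _ ≤ Real.exp (-2 * β ^ 2 / α) := Real.exp_le_exp.2 hexp_le
    -- lower tail
    have h2 : (μ {ω | (∑ a, Y a) ω ≤ -(β * τ)}).toReal ≤ Real.exp (-2 * β ^ 2 / α) := by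
      refine (measure_le_le_exp_mul_mgf (-(β * τ)) (neg_nonpos.2 ht.le) (hTint (-t))).trans ?_
      have harg : -(-t) * -(β * τ) = -t * (β * τ) := by ring
      calc Real.exp (-(-t) * -(β * τ)) * mgf (∑ a, Y a) μ (-t)
          ≤ Real.exp (-(-t) * -(β * τ)) * Real.exp ((-t) ^ 2 * V / 8) :=
            mul_le_mul_of_nonneg_left (hmgfT (-t)) (Real.exp_pos _).le
        _ = Real.exp (-t * (β * τ) + t ^ 2 * V / 8) := by
            rw [← Real.exp_add, harg]; ring_nf
        _ ≤ Real.exp (-2 * β ^ 2 / α) := Real.exp_le_exp.2 hexp_le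
    have hsub : {ω | β * τ ≤ |(∑ a, X a ω * w a) - q * ∑ a, w a|} ⊆
        {ω | β * τ ≤ (∑ a, Y a) ω} ∪ {ω | (∑ a, Y a) ω ≤ -(β * τ)} := by
      intro ω hω
      have hT : (∑ a, Y a) ω = (∑ a, X a ω * w a) - q * ∑ a, w a := by
        simp only [Finset.sum_apply, hY_def]
        rw [Finset.mul_sum, ← Finset.sum_sub_distrib]
        exact Finset.sum_congr rfl fun a _ => by ring
      simp only [Set.mem_setOf_eq] at hω
      rcases le_abs.1 hω with h | h
      · exact Or.inl (show β * τ ≤ (∑ a, Y a) ω by rw [hT]; exact h)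
      · exact Or.inr (show (∑ a, Y a) ω ≤ -(β * τ) by rw [hT]; linarith)
    calc μ {ω | β * τ ≤ |(∑ a, X a ω * w a) - q * ∑ a, w a|}
        ≤ μ ({ω | β * τ ≤ (∑ a, Y a) ω} ∪ {ω | (∑ a, Y a) ω ≤ -(β * τ)}) := measure_mono hsub
      _ ≤ μ {ω | β * τ ≤ (∑ a, Y a) ω} + μ {ω | (∑ a, Y a) ω ≤ -(β * τ)} :=
          measure_union_le _ _
      _ ≤ ENNReal.ofReal (Real.exp (-2 * β ^ 2 / α)) +
          ENNReal.ofReal (Real.exp (-2 * β ^ 2 / α)) := by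
          have e1 : μ {ω | β * τ ≤ (∑ a, Y a) ω} =
              ENNReal.ofReal (μ {ω | β * τ ≤ (∑ a, Y a) ω}).toReal :=
            (ENNReal.ofReal_toReal (measure_ne_top μ _)).symm
          have e2 : μ {ω | (∑ a, Y a) ω ≤ -(β * τ)} =
              ENNReal.ofReal (μ {ω | (∑ a, Y a) ω ≤ -(β * τ)}).toReal :=
            (ENNReal.ofReal_toReal (measure_ne_top μ _)).symm
          rw [e1, e2]
          exact add_le_add (ENNReal.ofReal_le_ofReal h1) (ENNReal.ofReal_le_ofReal h2)
      _ = ENNReal.ofReal (2 * Real.exp (-2 * β ^ 2 / α)) := by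
          rw [← ENNReal.ofReal_add (Real.exp_pos _).le (Real.exp_pos _).le]
          congr 1
          ring
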